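/- Let Γ_H be the H-shaped tree with positive travel times t_1,…,t_5. Then there exists a constant C such that for all real T ≥ 0: B(Γ_H, A, T) = W(2t_1,2t_3,2t_4,2t_5;T) + W(2t_2,2t_3,2t_4,2t_5;T) − W(2t_1,2t_4,2t_5;T) − W(2t_2,2t_4,2t_5;T) + W(2t_1,2t_2;T) + W(2t_1;T) + W(2t_2;T) + C. -/

import Mathlib

open SimpleGraph

/-- `F` is the edge set of a rooted subtree (a connected subgraph containing the root `A`,
determined by its edge set) of the graph `G`. -/
def IsRootedSubtree {V : Type*} (G : SimpleGraph V) (A : V) (F : Set (Sym2 V)) : Prop :=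
  F ⊆ G.edgeSet ∧ ∀ v : V, (∃ e ∈ F, v ∈ e) → (SimpleGraph.fromEdgeSet F).Reachable A v

-- `B(G, A, T)`: the sum, over all pairs `(Γ', n)` where `Γ'` is a rooted subtree (root `A`)
-- with nonempty edge set `F` and `n` assigns a positive integer to every edge of `Γ'` with
-- `∑_{e ∈ F} 2 n_e t_e ≤ T`, of the weight `deg A - r(Γ')`, where `r(Γ')` is the number of
-- edges of `Γ'` incident to `A` (the number of new points born at `A` up to time `T`).
open scoped Classical in
noncomputable def Bcount {V : Type*} [Fintype V] [DecidableEq V]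
    (G : SimpleGraph V) (A : V) (t : Sym2 V → ℝ) (T : ℝ) : ℤ :=
  ∑ F : Finset (Sym2 V),
    if IsRootedSubtree G A ↑F ∧ F.Nonempty then
      ((Nat.card {w : V | G.Adj A w} : ℤ) - ((F.filter (fun e => A ∈ e)).card : ℤ)) *
        (Nat.card {n : Sym2 V → ℕ |
          (∀ e ∈ F, 1 ≤ n e) ∧ (∀ e ∉ F, n e = 0) ∧
          ∑ e ∈ F, (n e : ℝ) * (2 * t e) ≤ T} : ℤ)
    else 0

/-- `W(s₁, …, s_m; T)`: the number of `m`-tuples of nonnegative integers `(n₁, …, n_m)` with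
`s₁ n₁ + ⋯ + s_m n_m ≤ T`. -/
noncomputable def W {m : ℕ} (s : Fin m → ℝ) (T : ℝ) : ℕ :=
  Nat.card {n : Fin m → ℕ | ∑ i, (n i : ℝ) * s i ≤ T}

/-- The H-shaped tree `Γ_H`: inner vertices `A = 0` and `B = 1`; pendant edges
`e₁ = s(0,2)`, `e₂ = s(0,3)` at `A`; the jumper `e₃ = s(0,1)`; pendant edges
`e₄ = s(1,4)`, `e₅ = s(1,5)` at `B`. -/
def GammaH : SimpleGraph (Fin 6) :=
  SimpleGraph.fromEdgeSet {s(0, 2), s(0, 3), s(0, 1), s(1, 4), s(1, 5)}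

/-! ### Auxiliary definitions -/

def E5 : Finset (Sym2 (Fin 6)) := {s(0,2), s(0,3), s(0,1), s(1,4), s(1,5)}

instance instAdjDec (F : Finset (Sym2 (Fin 6))) :
    DecidableRel (SimpleGraph.fromEdgeSet (↑F : Set (Sym2 (Fin 6)))).Adj := fun a b =>
  decidable_of_iff (s(a, b) ∈ F ∧ a ≠ b)
    (by rw [SimpleGraph.fromEdgeSet_adj, Finset.mem_coe])

def Fok (F : Finset (Sym2 (Fin 6))) : Prop :=
  (F ⊆ E5 ∧ ∀ v : Fin 6, (∃ e ∈ F, v ∈ e) →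
    (SimpleGraph.fromEdgeSet (↑F : Set (Sym2 (Fin 6)))).Reachable 0 v) ∧ F.Nonempty

instance (F : Finset (Sym2 (Fin 6))) : Decidable (Fok F) :=
  inferInstanceAs (Decidable (_ ∧ _))

noncomputable def NB (t : Sym2 (Fin 6) → ℝ) (F : Finset (Sym2 (Fin 6))) (T : ℝ) : ℕ :=
  Nat.card {n : Sym2 (Fin 6) → ℕ |
    (∀ e ∈ F, 1 ≤ n e) ∧ (∀ e ∉ F, n e = 0) ∧
    ∑ e ∈ F, (n e : ℝ) * (2 * t e) ≤ T}

noncomputable def Q {m : ℕ} (s : Fin m → ℝ) (S : Finset (Fin m)) (T : ℝ) : ℕ :=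
  Nat.card {n : Fin m → ℕ |
    (∀ i ∈ S, 1 ≤ n i) ∧ (∀ i ∉ S, n i = 0) ∧ ∑ i, (n i : ℝ) * s i ≤ T}

/-! ### edge set of GammaH -/

lemma edgeSet_GammaH : GammaH.edgeSet = ↑E5 := by
  rw [GammaH, SimpleGraph.edgeSet_fromEdgeSet]
  ext e
  simp only [Set.mem_diff, Set.mem_insert_iff, Set.mem_singleton_iff, Set.mem_setOf_eq,
    Finset.coe_insert, Finset.mem_coe, Finset.mem_insert, Finset.mem_singleton, E5]
  revert e; decide

/-! ### finiteness -/

lemma finA {m : ℕ} (s : Fin m → ℝ) (hs : ∀ i, 0 < s i) (T : ℝ) :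
    {n : Fin m → ℕ | ∑ i, (n i : ℝ) * s i ≤ T}.Finite := by
  apply Set.Finite.subset
    (Set.Finite.pi (fun i : Fin m => Set.finite_Iic (Nat.ceil (T / s i))))
  intro n hn
  simp only [Set.mem_pi, Set.mem_univ, Set.mem_Iic, forall_true_left]
  intro i
  have h1 : (n i : ℝ) * s i ≤ T := by
    refine le_trans ?_ hn
    apply Finset.single_le_sum (f := fun j => (n j : ℝ) * s j) ?_ (Finset.mem_univ i)
    intro j _; exact mul_nonneg (Nat.cast_nonneg _) (hs j).le
  have h2 : (n i : ℝ) ≤ T / s i := (le_div_iff₀ (hs i)).mpr h1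
  calc n i = ⌈(n i : ℝ)⌉₊ := (Nat.ceil_natCast _).symm
  _ ≤ _ := Nat.ceil_mono h2

/-! ### W as a sum over supports -/

lemma W_eq {m : ℕ} (s : Fin m → ℝ) (hs : ∀ i, 0 < s i) (T : ℝ) :
    (W s T : ℤ) = ∑ S : Finset (Fin m), (Q s S T : ℤ) := by
  classical
  have hA := finA s hs T
  have hB : ∀ S : Finset (Fin m),
      ({n : Fin m → ℕ | (∀ i ∈ S, 1 ≤ n i) ∧ (∀ i ∉ S, n i = 0) ∧
        ∑ i, (n i : ℝ) * s i ≤ T} : Set (Fin m → ℕ)).Finite := by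
    intro S; exact hA.subset (fun n hn => hn.2.2)
  haveI : ∀ S : Finset (Fin m), Fintype ({n : Fin m → ℕ | (∀ i ∈ S, 1 ≤ n i) ∧
      (∀ i ∉ S, n i = 0) ∧ ∑ i, (n i : ℝ) * s i ≤ T} : Set (Fin m → ℕ)) :=
    fun S => (hB S).fintype
  let g : (Σ S : Finset (Fin m), ({n : Fin m → ℕ | (∀ i ∈ S, 1 ≤ n i) ∧
      (∀ i ∉ S, n i = 0) ∧ ∑ i, (n i : ℝ) * s i ≤ T} : Set (Fin m → ℕ))) →
      ({n : Fin m → ℕ | ∑ i, (n i : ℝ) * s i ≤ T} : Set (Fin m → ℕ)) :=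
    fun x => ⟨x.2.1, x.2.2.2.2⟩
  have hg : Function.Bijective g := by
    constructor
    · rintro ⟨S, n, hn⟩ ⟨S', n', hn'⟩ h
      have hnn : n = n' := congrArg Subtype.val h
      subst hnn
      have hSS : S = S' := by
        ext i
        constructor
        · intro hi
          by_contra hi'
          have h1 := hn'.2.1 i hi'
          have h2 := hn.1 i hi
          omega
        · intro hi
          by_contra hi'
          have h1 := hn.2.1 i hi'
          have h2 := hn'.1 i hi
          omega
      subst hSS
      rfl
    · rintro ⟨n, hn⟩
      refine ⟨⟨Finset.univ.filter (fun i => n i ≠ 0), ⟨n, ?_, ?_, hn⟩⟩, rfl⟩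
      · intro i hi; simp only [Finset.mem_filter] at hi; omega
      · intro i hi; simp only [Finset.mem_filter, Finset.mem_univ, true_and] at hi
        omega
  have key : Nat.card ({n : Fin m → ℕ | ∑ i, (n i : ℝ) * s i ≤ T} : Set (Fin m → ℕ))
      = ∑ S : Finset (Fin m), Q s S T := by
    rw [← Nat.card_congr (Equiv.ofBijective g hg)]
    rw [Nat.card_eq_fintype_card, Fintype.card_sigma]
    refine Finset.sum_congr rfl (fun S _ => ?_)
    rw [Q, Nat.card_eq_fintype_card]
  simp only [W]
  rw [key]
  push_cast
  rfl

/-! ### NB equals Q via the embedding -/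

lemma NB_eq_Q {m : ℕ} (t : Sym2 (Fin 6) → ℝ) (T : ℝ) (f : Fin m → Sym2 (Fin 6))
    (hf : Function.Injective f) (s : Fin m → ℝ) (hs : ∀ i, s i = 2 * t (f i))
    (S : Finset (Fin m)) (F : Finset (Sym2 (Fin 6))) (hF : F = S.image f) :
    NB t F T = Q s S T := by
  classical
  have hmemF : ∀ i : Fin m, f i ∈ F ↔ i ∈ S := by
    intro i
    subst hF
    simp only [Finset.mem_image]
    constructor
    · rintro ⟨j, hj, hje⟩; rwa [← hf hje]
    · intro hi; exact ⟨i, hi, rfl⟩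
  have hsum : ∀ n : Sym2 (Fin 6) → ℕ, (∀ i ∉ S, n (f i) = 0) →
      ∑ e ∈ F, (n e : ℝ) * (2 * t e) = ∑ i, (n (f i) : ℝ) * s i := by
    intro n h0
    subst hF
    rw [Finset.sum_image (fun x _ y _ h => hf h)]
    rw [← Finset.sum_subset (Finset.subset_univ S)
      (fun i _ hi => by rw [h0 i hi]; simp)]
    refine Finset.sum_congr rfl (fun i _ => by rw [hs i])
  refine Nat.card_congr ?_
  refine
    { toFun := fun x => ⟨fun i => x.1 (f i), ?_, ?_, ?_⟩
      invFun := fun y => ⟨Function.extend f y.1 (fun _ => 0), ?_, ?_, ?_⟩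
      left_inv := ?_
      right_inv := ?_ }
  · intro i hi; exact x.2.1 (f i) ((hmemF i).mpr hi)
  · intro i hi; exact x.2.2.1 (f i) (fun h => hi ((hmemF i).mp h))
  · rw [← hsum x.1 (fun i hi => x.2.2.1 (f i) (fun h => hi ((hmemF i).mp h)))]
    exact x.2.2.2
  · intro e he
    obtain ⟨i, hi, rfl⟩ := Finset.mem_image.mp (hF ▸ he)
    rw [hf.extend_apply]
    exact y.2.1 i hi
  · intro e he
    by_cases hr : ∃ i, f i = e
    · obtain ⟨i, rfl⟩ := hr
      rw [hf.extend_apply]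
      exact y.2.2.1 i (fun hi => he ((hmemF i).mpr hi))
    · exact Function.extend_apply' _ _ _ hr
  · have : ∀ i ∉ S, Function.extend f y.1 (fun _ => 0) (f i) = 0 := by
      intro i hi; rw [hf.extend_apply]; exact y.2.2.1 i hi
    rw [hsum _ this]
    have h2 : ∀ i ∈ Finset.univ, ((Function.extend f y.1 (fun _ => 0) (f i) : ℕ) : ℝ) * s i
        = (y.1 i : ℝ) * s i := fun i _ => by rw [hf.extend_apply]
    rw [Finset.sum_congr rfl h2]
    exact y.2.2.2
  · rintro ⟨n, hn⟩
    ext e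
    simp only
    by_cases hr : ∃ i, f i = e
    · obtain ⟨i, rfl⟩ := hr
      rw [hf.extend_apply]
    · rw [Function.extend_apply' _ _ _ hr]
      refine (hn.2.1 e (fun he => hr ?_)).symm
      obtain ⟨i, _, hie⟩ := Finset.mem_image.mp (hF ▸ he)
      exact ⟨i, hie⟩
  · rintro ⟨u, hu⟩
    ext i
    simp only [hf.extend_apply]

lemma NB_empty (t : Sym2 (Fin 6) → ℝ) (T : ℝ) (hT : 0 ≤ T) : NB t ∅ T = 1 := by
  rw [NB]
  have : {n : Sym2 (Fin 6) → ℕ |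
      (∀ e ∈ (∅ : Finset (Sym2 (Fin 6))), 1 ≤ n e) ∧
      (∀ e ∉ (∅ : Finset (Sym2 (Fin 6))), n e = 0) ∧
      ∑ e ∈ (∅ : Finset (Sym2 (Fin 6))), (n e : ℝ) * (2 * t e) ≤ T}
      = {fun _ => 0} := by
    ext n
    simp only [Finset.notMem_empty, false_implies, implies_true, true_and,
      Finset.sum_empty, Set.mem_singleton_iff, Finset.notMem_empty]
    constructor
    · rintro ⟨h1, _⟩; funext e; exact h1 e (by simp)
    · rintro rfl; exact ⟨fun e _ => rfl, hT⟩
  rw [this, Nat.card_unique]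

lemma psing {α : Type*} [DecidableEq α] (a : α) :
    ({a} : Finset α).powerset = {∅, {a}} := by
  ext t; simp [Finset.subset_singleton_iff]

/-! ### Bcount reduction -/

lemma deg_GammaH : Nat.card {w : Fin 6 | GammaH.Adj 0 w} = 3 := by
  have h : {w : Fin 6 | GammaH.Adj 0 w} = (↑({1,2,3} : Finset (Fin 6)) : Set (Fin 6)) := by
    ext w
    rw [GammaH, Set.mem_setOf_eq, SimpleGraph.fromEdgeSet_adj]
    simp only [Set.mem_insert_iff, Set.mem_singleton_iff, Finset.coe_insert,
      Finset.mem_coe, Finset.mem_insert, Finset.mem_singleton, Finset.coe_singleton]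
    revert w; decide
  rw [h, Nat.card_coe_set_eq, Set.ncard_coe_finset]
  decide

lemma irs_iff (F : Finset (Sym2 (Fin 6))) :
    (IsRootedSubtree GammaH 0 ↑F ∧ F.Nonempty) ↔ Fok F := by
  rw [IsRootedSubtree, Fok, edgeSet_GammaH]
  constructor
  · rintro ⟨⟨h1, h2⟩, h3⟩
    exact ⟨⟨Finset.coe_subset.mp h1, fun v hv => h2 v (by simpa using hv)⟩, h3⟩
  · rintro ⟨⟨h1, h2⟩, h3⟩
    exact ⟨⟨Finset.coe_subset.mpr h1, fun v hv => h2 v (by simpa using hv)⟩, h3⟩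

lemma Bcount_eq (t : Sym2 (Fin 6) → ℝ) (T : ℝ) :
    Bcount GammaH 0 t T = ∑ F ∈ E5.powerset,
      (if Fok F then
        ((3 : ℤ) - ((F.filter (fun e => (0 : Fin 6) ∈ e)).card : ℤ)) * (NB t F T : ℤ)
      else 0) := by
  classical
  rw [Bcount]
  rw [← Finset.sum_subset (Finset.subset_univ E5.powerset)]
  · refine Finset.sum_congr rfl (fun F _ => ?_)
    rw [if_congr (irs_iff F) rfl rfl]
    split
    · rw [deg_GammaH, NB, Finset.filter_congr_decidable, Nat.cast_ofNat]
    · rfl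
  · intro F _ hF
    rw [if_neg]
    rintro ⟨⟨h1, _⟩, _⟩
    rw [edgeSet_GammaH, Finset.coe_subset] at h1
    exact hF (Finset.mem_powerset.mpr h1)


/-- for the H-shaped tree `Γ_H` with positive travel times `t₁, …, t₅` there is a
constant `C` such that for all `T ≥ 0`,
`B(Γ_H, A, T) = W(2t₁,2t₃,2t₄,2t₅;T) + W(2t₂,2t₃,2t₄,2t₅;T) − W(2t₁,2t₄,2t₅;T)
  − W(2t₂,2t₄,2t₅;T) + W(2t₁,2t₂;T) + W(2t₁;T) + W(2t₂;T) + C`. -/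
theorem Bcount_GammaH_A (t₁ t₂ t₃ t₄ t₅ : ℝ)
    (h₁ : 0 < t₁) (h₂ : 0 < t₂) (h₃ : 0 < t₃) (h₄ : 0 < t₄) (h₅ : 0 < t₅)
    (t : Sym2 (Fin 6) → ℝ)
    (he₁ : t s(0, 2) = t₁) (he₂ : t s(0, 3) = t₂) (he₃ : t s(0, 1) = t₃)
    (he₄ : t s(1, 4) = t₄) (he₅ : t s(1, 5) = t₅) :
    ∃ C : ℤ, ∀ T : ℝ, 0 ≤ T →
      Bcount GammaH 0 t T =
        (W ![2*t₁, 2*t₃, 2*t₄, 2*t₅] T : ℤ) + (W ![2*t₂, 2*t₃, 2*t₄, 2*t₅] T : ℤ)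
          - (W ![2*t₁, 2*t₄, 2*t₅] T : ℤ) - (W ![2*t₂, 2*t₄, 2*t₅] T : ℤ)
          + (W ![2*t₁, 2*t₂] T : ℤ) + (W ![2*t₁] T : ℤ) + (W ![2*t₂] T : ℤ) + C := by
  refine ⟨-3, fun T hT => ?_⟩
  have hpw1 : ∀ i, (0:ℝ) < ![2*t₁, 2*t₃, 2*t₄, 2*t₅] i := by
    intro i; fin_cases i <;> simp <;> linarith
  have hfw1 : Function.Injective (![s(0,2), s(0,1), s(1,4), s(1,5)] : Fin 4 → Sym2 (Fin 6)) := by decide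
  have hsw1 : ∀ i : Fin 4, ![2*t₁, 2*t₃, 2*t₄, 2*t₅] i = 2 * t ((![s(0,2), s(0,1), s(1,4), s(1,5)] : Fin 4 → Sym2 (Fin 6)) i) := by
    intro i; fin_cases i <;> simp [he₁, he₃, he₄, he₅]
  have hpw2 : ∀ i, (0:ℝ) < ![2*t₂, 2*t₃, 2*t₄, 2*t₅] i := by
    intro i; fin_cases i <;> simp <;> linarith
  have hfw2 : Function.Injective (![s(0,3), s(0,1), s(1,4), s(1,5)] : Fin 4 → Sym2 (Fin 6)) := by decide
  have hsw2 : ∀ i : Fin 4, ![2*t₂, 2*t₃, 2*t₄, 2*t₅] i = 2 * t ((![s(0,3), s(0,1), s(1,4), s(1,5)] : Fin 4 → Sym2 (Fin 6)) i) := by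
    intro i; fin_cases i <;> simp [he₂, he₃, he₄, he₅]
  have hpw3 : ∀ i, (0:ℝ) < ![2*t₁, 2*t₄, 2*t₅] i := by
    intro i; fin_cases i <;> simp <;> linarith
  have hfw3 : Function.Injective (![s(0,2), s(1,4), s(1,5)] : Fin 3 → Sym2 (Fin 6)) := by decide
  have hsw3 : ∀ i : Fin 3, ![2*t₁, 2*t₄, 2*t₅] i = 2 * t ((![s(0,2), s(1,4), s(1,5)] : Fin 3 → Sym2 (Fin 6)) i) := by
    intro i; fin_cases i <;> simp [he₁, he₄, he₅]
  have hpw4 : ∀ i, (0:ℝ) < ![2*t₂, 2*t₄, 2*t₅] i := by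
    intro i; fin_cases i <;> simp <;> linarith
  have hfw4 : Function.Injective (![s(0,3), s(1,4), s(1,5)] : Fin 3 → Sym2 (Fin 6)) := by decide
  have hsw4 : ∀ i : Fin 3, ![2*t₂, 2*t₄, 2*t₅] i = 2 * t ((![s(0,3), s(1,4), s(1,5)] : Fin 3 → Sym2 (Fin 6)) i) := by
    intro i; fin_cases i <;> simp [he₂, he₄, he₅]
  have hpw5 : ∀ i, (0:ℝ) < ![2*t₁, 2*t₂] i := by
    intro i; fin_cases i <;> simp <;> linarith
  have hfw5 : Function.Injective (![s(0,2), s(0,3)] : Fin 2 → Sym2 (Fin 6)) := by decide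
  have hsw5 : ∀ i : Fin 2, ![2*t₁, 2*t₂] i = 2 * t ((![s(0,2), s(0,3)] : Fin 2 → Sym2 (Fin 6)) i) := by
    intro i; fin_cases i <;> simp [he₁, he₂]
  have hpw6 : ∀ i, (0:ℝ) < ![2*t₁] i := by
    intro i; fin_cases i <;> simp <;> linarith
  have hfw6 : Function.Injective (![s(0,2)] : Fin 1 → Sym2 (Fin 6)) := by decide
  have hsw6 : ∀ i : Fin 1, ![2*t₁] i = 2 * t ((![s(0,2)] : Fin 1 → Sym2 (Fin 6)) i) := by
    intro i; fin_cases i <;> simp [he₁]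
  have hpw7 : ∀ i, (0:ℝ) < ![2*t₂] i := by
    intro i; fin_cases i <;> simp <;> linarith
  have hfw7 : Function.Injective (![s(0,3)] : Fin 1 → Sym2 (Fin 6)) := by decide
  have hsw7 : ∀ i : Fin 1, ![2*t₂] i = 2 * t ((![s(0,3)] : Fin 1 → Sym2 (Fin 6)) i) := by
    intro i; fin_cases i <;> simp [he₂]
  rw [Bcount_eq t T, W_eq ![2*t₁, 2*t₃, 2*t₄, 2*t₅] hpw1 T, W_eq ![2*t₂, 2*t₃, 2*t₄, 2*t₅] hpw2 T, W_eq ![2*t₁, 2*t₄, 2*t₅] hpw3 T, W_eq ![2*t₂, 2*t₄, 2*t₅] hpw4 T, W_eq ![2*t₁, 2*t₂] hpw5 T, W_eq ![2*t₁] hpw6 T, W_eq ![2*t₂] hpw7 T]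
  have pa1 : s(0,2) ∉ ({s(0,3), s(0,1), s(1,4), s(1,5)} : Finset (Sym2 (Fin 6))) := by decide
  have pa2 : s(0,3) ∉ ({s(0,1), s(1,4), s(1,5)} : Finset (Sym2 (Fin 6))) := by decide
  have pa3 : s(0,1) ∉ ({s(1,4), s(1,5)} : Finset (Sym2 (Fin 6))) := by decide
  have pa4 : s(1,4) ∉ ({s(1,5)} : Finset (Sym2 (Fin 6))) := by decide
  have pb0 : (∅ : Finset (Sym2 (Fin 6))) ∉ ({{s(1,5)}} : Finset (Finset (Sym2 (Fin 6)))) := by decide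
  have q41 : (0 : Fin 4) ∉ ({1,2,3} : Finset (Fin 4)) := by decide
  have q42 : (1 : Fin 4) ∉ ({2,3} : Finset (Fin 4)) := by decide
  have q43 : (2 : Fin 4) ∉ ({3} : Finset (Fin 4)) := by decide
  have q4b : (∅ : Finset (Fin 4)) ∉ ({{3}} : Finset (Finset (Fin 4))) := by decide
  have q31 : (0 : Fin 3) ∉ ({1,2} : Finset (Fin 3)) := by decide
  have q32 : (1 : Fin 3) ∉ ({2} : Finset (Fin 3)) := by decide
  have q3b : (∅ : Finset (Fin 3)) ∉ ({{2}} : Finset (Finset (Fin 3))) := by decide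
  have q21 : (0 : Fin 2) ∉ ({1} : Finset (Fin 2)) := by decide
  have q2b : (∅ : Finset (Fin 2)) ∉ ({{1}} : Finset (Finset (Fin 2))) := by decide
  have q1b : (∅ : Finset (Fin 1)) ∉ ({{0}} : Finset (Finset (Fin 1))) := by decide
  rw [← @Finset.powerset_univ (Fin 4) _, ← @Finset.powerset_univ (Fin 3) _, ← @Finset.powerset_univ (Fin 2) _, ← @Finset.powerset_univ (Fin 1) _]
  rw [show (Finset.univ : Finset (Fin 4)) = ({0,1,2,3} : Finset (Fin 4)) from by decide]
  rw [show (Finset.univ : Finset (Fin 3)) = ({0,1,2} : Finset (Fin 3)) from by decide]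
  rw [show (Finset.univ : Finset (Fin 2)) = ({0,1} : Finset (Fin 2)) from by decide]
  rw [show (Finset.univ : Finset (Fin 1)) = ({0} : Finset (Fin 1)) from by decide]
  simp only [E5, Finset.sum_powerset_insert pa1, Finset.sum_powerset_insert pa2,
    Finset.sum_powerset_insert pa3, Finset.sum_powerset_insert pa4,
    Finset.sum_powerset_insert q41, Finset.sum_powerset_insert q42, Finset.sum_powerset_insert q43,
    Finset.sum_powerset_insert q31, Finset.sum_powerset_insert q32,
    Finset.sum_powerset_insert q21,
    psing, Finset.sum_insert pb0, Finset.sum_insert q4b,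
    Finset.sum_insert q3b, Finset.sum_insert q2b, Finset.sum_insert q1b,
    Finset.sum_singleton, Finset.insert_empty.trans rfl]
  rw [if_neg (show ¬ Fok (∅ : Finset (Sym2 (Fin 6))) from by decide)]
  rw [if_pos (show Fok ({s(0,2)} : Finset (Sym2 (Fin 6))) from by decide)]
  rw [if_pos (show Fok ({s(0,3)} : Finset (Sym2 (Fin 6))) from by decide)]
  rw [if_pos (show Fok ({s(0,1)} : Finset (Sym2 (Fin 6))) from by decide)]
  rw [if_neg (show ¬ Fok ({s(1,4)} : Finset (Sym2 (Fin 6))) from by decide)]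
  rw [if_neg (show ¬ Fok ({s(1,5)} : Finset (Sym2 (Fin 6))) from by decide)]
  rw [if_pos (show Fok ({s(0,2), s(0,3)} : Finset (Sym2 (Fin 6))) from by decide)]
  rw [if_pos (show Fok ({s(0,2), s(0,1)} : Finset (Sym2 (Fin 6))) from by decide)]
  rw [if_neg (show ¬ Fok ({s(0,2), s(1,4)} : Finset (Sym2 (Fin 6))) from by decide)]
  rw [if_neg (show ¬ Fok ({s(0,2), s(1,5)} : Finset (Sym2 (Fin 6))) from by decide)]
  rw [if_pos (show Fok ({s(0,3), s(0,1)} : Finset (Sym2 (Fin 6))) from by decide)]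
  rw [if_neg (show ¬ Fok ({s(0,3), s(1,4)} : Finset (Sym2 (Fin 6))) from by decide)]
  rw [if_neg (show ¬ Fok ({s(0,3), s(1,5)} : Finset (Sym2 (Fin 6))) from by decide)]
  rw [if_pos (show Fok ({s(0,1), s(1,4)} : Finset (Sym2 (Fin 6))) from by decide)]
  rw [if_pos (show Fok ({s(0,1), s(1,5)} : Finset (Sym2 (Fin 6))) from by decide)]
  rw [if_neg (show ¬ Fok ({s(1,4), s(1,5)} : Finset (Sym2 (Fin 6))) from by decide)]
  rw [if_pos (show Fok ({s(0,2), s(0,3), s(0,1)} : Finset (Sym2 (Fin 6))) from by decide)]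
  rw [if_neg (show ¬ Fok ({s(0,2), s(0,3), s(1,4)} : Finset (Sym2 (Fin 6))) from by decide)]
  rw [if_neg (show ¬ Fok ({s(0,2), s(0,3), s(1,5)} : Finset (Sym2 (Fin 6))) from by decide)]
  rw [if_pos (show Fok ({s(0,2), s(0,1), s(1,4)} : Finset (Sym2 (Fin 6))) from by decide)]
  rw [if_pos (show Fok ({s(0,2), s(0,1), s(1,5)} : Finset (Sym2 (Fin 6))) from by decide)]
  rw [if_neg (show ¬ Fok ({s(0,2), s(1,4), s(1,5)} : Finset (Sym2 (Fin 6))) from by decide)]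
  rw [if_pos (show Fok ({s(0,3), s(0,1), s(1,4)} : Finset (Sym2 (Fin 6))) from by decide)]
  rw [if_pos (show Fok ({s(0,3), s(0,1), s(1,5)} : Finset (Sym2 (Fin 6))) from by decide)]
  rw [if_neg (show ¬ Fok ({s(0,3), s(1,4), s(1,5)} : Finset (Sym2 (Fin 6))) from by decide)]
  rw [if_pos (show Fok ({s(0,1), s(1,4), s(1,5)} : Finset (Sym2 (Fin 6))) from by decide)]
  rw [if_pos (show Fok ({s(0,2), s(0,3), s(0,1), s(1,4)} : Finset (Sym2 (Fin 6))) from by decide)]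
  rw [if_pos (show Fok ({s(0,2), s(0,3), s(0,1), s(1,5)} : Finset (Sym2 (Fin 6))) from by decide)]
  rw [if_neg (show ¬ Fok ({s(0,2), s(0,3), s(1,4), s(1,5)} : Finset (Sym2 (Fin 6))) from by decide)]
  rw [if_pos (show Fok ({s(0,2), s(0,1), s(1,4), s(1,5)} : Finset (Sym2 (Fin 6))) from by decide)]
  rw [if_pos (show Fok ({s(0,3), s(0,1), s(1,4), s(1,5)} : Finset (Sym2 (Fin 6))) from by decide)]
  rw [if_pos (show Fok ({s(0,2), s(0,3), s(0,1), s(1,4), s(1,5)} : Finset (Sym2 (Fin 6))) from by decide)]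
  rw [show (Finset.filter (fun e => (0:Fin 6) ∈ e) ({s(0,2)} : Finset (Sym2 (Fin 6)))).card = 1 from by decide]
  rw [show (Finset.filter (fun e => (0:Fin 6) ∈ e) ({s(0,3)} : Finset (Sym2 (Fin 6)))).card = 1 from by decide]
  rw [show (Finset.filter (fun e => (0:Fin 6) ∈ e) ({s(0,1)} : Finset (Sym2 (Fin 6)))).card = 1 from by decide]
  rw [show (Finset.filter (fun e => (0:Fin 6) ∈ e) ({s(0,2), s(0,3)} : Finset (Sym2 (Fin 6)))).card = 2 from by decide]
  rw [show (Finset.filter (fun e => (0:Fin 6) ∈ e) ({s(0,2), s(0,1)} : Finset (Sym2 (Fin 6)))).card = 2 from by decide]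
  rw [show (Finset.filter (fun e => (0:Fin 6) ∈ e) ({s(0,3), s(0,1)} : Finset (Sym2 (Fin 6)))).card = 2 from by decide]
  rw [show (Finset.filter (fun e => (0:Fin 6) ∈ e) ({s(0,1), s(1,4)} : Finset (Sym2 (Fin 6)))).card = 1 from by decide]
  rw [show (Finset.filter (fun e => (0:Fin 6) ∈ e) ({s(0,1), s(1,5)} : Finset (Sym2 (Fin 6)))).card = 1 from by decide]
  rw [show (Finset.filter (fun e => (0:Fin 6) ∈ e) ({s(0,2), s(0,3), s(0,1)} : Finset (Sym2 (Fin 6)))).card = 3 from by decide]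
  rw [show (Finset.filter (fun e => (0:Fin 6) ∈ e) ({s(0,2), s(0,1), s(1,4)} : Finset (Sym2 (Fin 6)))).card = 2 from by decide]
  rw [show (Finset.filter (fun e => (0:Fin 6) ∈ e) ({s(0,2), s(0,1), s(1,5)} : Finset (Sym2 (Fin 6)))).card = 2 from by decide]
  rw [show (Finset.filter (fun e => (0:Fin 6) ∈ e) ({s(0,3), s(0,1), s(1,4)} : Finset (Sym2 (Fin 6)))).card = 2 from by decide]
  rw [show (Finset.filter (fun e => (0:Fin 6) ∈ e) ({s(0,3), s(0,1), s(1,5)} : Finset (Sym2 (Fin 6)))).card = 2 from by decide]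
  rw [show (Finset.filter (fun e => (0:Fin 6) ∈ e) ({s(0,1), s(1,4), s(1,5)} : Finset (Sym2 (Fin 6)))).card = 1 from by decide]
  rw [show (Finset.filter (fun e => (0:Fin 6) ∈ e) ({s(0,2), s(0,3), s(0,1), s(1,4)} : Finset (Sym2 (Fin 6)))).card = 3 from by decide]
  rw [show (Finset.filter (fun e => (0:Fin 6) ∈ e) ({s(0,2), s(0,3), s(0,1), s(1,5)} : Finset (Sym2 (Fin 6)))).card = 3 from by decide]
  rw [show (Finset.filter (fun e => (0:Fin 6) ∈ e) ({s(0,2), s(0,1), s(1,4), s(1,5)} : Finset (Sym2 (Fin 6)))).card = 2 from by decide]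
  rw [show (Finset.filter (fun e => (0:Fin 6) ∈ e) ({s(0,3), s(0,1), s(1,4), s(1,5)} : Finset (Sym2 (Fin 6)))).card = 2 from by decide]
  rw [show (Finset.filter (fun e => (0:Fin 6) ∈ e) ({s(0,2), s(0,3), s(0,1), s(1,4), s(1,5)} : Finset (Sym2 (Fin 6)))).card = 3 from by decide]
  rw [← NB_eq_Q t T (![s(0,2), s(0,1), s(1,4), s(1,5)] : Fin 4 → Sym2 (Fin 6)) hfw1 ![2*t₁, 2*t₃, 2*t₄, 2*t₅] hsw1 (∅ : Finset (Fin 4)) (∅ : Finset (Sym2 (Fin 6))) (by decide)]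
  rw [← NB_eq_Q t T (![s(0,2), s(0,1), s(1,4), s(1,5)] : Fin 4 → Sym2 (Fin 6)) hfw1 ![2*t₁, 2*t₃, 2*t₄, 2*t₅] hsw1 ({0} : Finset (Fin 4)) ({s(0,2)} : Finset (Sym2 (Fin 6))) (by decide)]
  rw [← NB_eq_Q t T (![s(0,2), s(0,1), s(1,4), s(1,5)] : Fin 4 → Sym2 (Fin 6)) hfw1 ![2*t₁, 2*t₃, 2*t₄, 2*t₅] hsw1 ({1} : Finset (Fin 4)) ({s(0,1)} : Finset (Sym2 (Fin 6))) (by decide)]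
  rw [← NB_eq_Q t T (![s(0,2), s(0,1), s(1,4), s(1,5)] : Fin 4 → Sym2 (Fin 6)) hfw1 ![2*t₁, 2*t₃, 2*t₄, 2*t₅] hsw1 ({2} : Finset (Fin 4)) ({s(1,4)} : Finset (Sym2 (Fin 6))) (by decide)]
  rw [← NB_eq_Q t T (![s(0,2), s(0,1), s(1,4), s(1,5)] : Fin 4 → Sym2 (Fin 6)) hfw1 ![2*t₁, 2*t₃, 2*t₄, 2*t₅] hsw1 ({3} : Finset (Fin 4)) ({s(1,5)} : Finset (Sym2 (Fin 6))) (by decide)]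
  rw [← NB_eq_Q t T (![s(0,2), s(0,1), s(1,4), s(1,5)] : Fin 4 → Sym2 (Fin 6)) hfw1 ![2*t₁, 2*t₃, 2*t₄, 2*t₅] hsw1 ({0, 1} : Finset (Fin 4)) ({s(0,2), s(0,1)} : Finset (Sym2 (Fin 6))) (by decide)]
  rw [← NB_eq_Q t T (![s(0,2), s(0,1), s(1,4), s(1,5)] : Fin 4 → Sym2 (Fin 6)) hfw1 ![2*t₁, 2*t₃, 2*t₄, 2*t₅] hsw1 ({0, 2} : Finset (Fin 4)) ({s(0,2), s(1,4)} : Finset (Sym2 (Fin 6))) (by decide)]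
  rw [← NB_eq_Q t T (![s(0,2), s(0,1), s(1,4), s(1,5)] : Fin 4 → Sym2 (Fin 6)) hfw1 ![2*t₁, 2*t₃, 2*t₄, 2*t₅] hsw1 ({0, 3} : Finset (Fin 4)) ({s(0,2), s(1,5)} : Finset (Sym2 (Fin 6))) (by decide)]
  rw [← NB_eq_Q t T (![s(0,2), s(0,1), s(1,4), s(1,5)] : Fin 4 → Sym2 (Fin 6)) hfw1 ![2*t₁, 2*t₃, 2*t₄, 2*t₅] hsw1 ({1, 2} : Finset (Fin 4)) ({s(0,1), s(1,4)} : Finset (Sym2 (Fin 6))) (by decide)]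
  rw [← NB_eq_Q t T (![s(0,2), s(0,1), s(1,4), s(1,5)] : Fin 4 → Sym2 (Fin 6)) hfw1 ![2*t₁, 2*t₃, 2*t₄, 2*t₅] hsw1 ({1, 3} : Finset (Fin 4)) ({s(0,1), s(1,5)} : Finset (Sym2 (Fin 6))) (by decide)]
  rw [← NB_eq_Q t T (![s(0,2), s(0,1), s(1,4), s(1,5)] : Fin 4 → Sym2 (Fin 6)) hfw1 ![2*t₁, 2*t₃, 2*t₄, 2*t₅] hsw1 ({2, 3} : Finset (Fin 4)) ({s(1,4), s(1,5)} : Finset (Sym2 (Fin 6))) (by decide)]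
  rw [← NB_eq_Q t T (![s(0,2), s(0,1), s(1,4), s(1,5)] : Fin 4 → Sym2 (Fin 6)) hfw1 ![2*t₁, 2*t₃, 2*t₄, 2*t₅] hsw1 ({0, 1, 2} : Finset (Fin 4)) ({s(0,2), s(0,1), s(1,4)} : Finset (Sym2 (Fin 6))) (by decide)]
  rw [← NB_eq_Q t T (![s(0,2), s(0,1), s(1,4), s(1,5)] : Fin 4 → Sym2 (Fin 6)) hfw1 ![2*t₁, 2*t₃, 2*t₄, 2*t₅] hsw1 ({0, 1, 3} : Finset (Fin 4)) ({s(0,2), s(0,1), s(1,5)} : Finset (Sym2 (Fin 6))) (by decide)]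
  rw [← NB_eq_Q t T (![s(0,2), s(0,1), s(1,4), s(1,5)] : Fin 4 → Sym2 (Fin 6)) hfw1 ![2*t₁, 2*t₃, 2*t₄, 2*t₅] hsw1 ({0, 2, 3} : Finset (Fin 4)) ({s(0,2), s(1,4), s(1,5)} : Finset (Sym2 (Fin 6))) (by decide)]
  rw [← NB_eq_Q t T (![s(0,2), s(0,1), s(1,4), s(1,5)] : Fin 4 → Sym2 (Fin 6)) hfw1 ![2*t₁, 2*t₃, 2*t₄, 2*t₅] hsw1 ({1, 2, 3} : Finset (Fin 4)) ({s(0,1), s(1,4), s(1,5)} : Finset (Sym2 (Fin 6))) (by decide)]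
  rw [← NB_eq_Q t T (![s(0,2), s(0,1), s(1,4), s(1,5)] : Fin 4 → Sym2 (Fin 6)) hfw1 ![2*t₁, 2*t₃, 2*t₄, 2*t₅] hsw1 ({0, 1, 2, 3} : Finset (Fin 4)) ({s(0,2), s(0,1), s(1,4), s(1,5)} : Finset (Sym2 (Fin 6))) (by decide)]
  rw [← NB_eq_Q t T (![s(0,3), s(0,1), s(1,4), s(1,5)] : Fin 4 → Sym2 (Fin 6)) hfw2 ![2*t₂, 2*t₃, 2*t₄, 2*t₅] hsw2 (∅ : Finset (Fin 4)) (∅ : Finset (Sym2 (Fin 6))) (by decide)]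
  rw [← NB_eq_Q t T (![s(0,3), s(0,1), s(1,4), s(1,5)] : Fin 4 → Sym2 (Fin 6)) hfw2 ![2*t₂, 2*t₃, 2*t₄, 2*t₅] hsw2 ({0} : Finset (Fin 4)) ({s(0,3)} : Finset (Sym2 (Fin 6))) (by decide)]
  rw [← NB_eq_Q t T (![s(0,3), s(0,1), s(1,4), s(1,5)] : Fin 4 → Sym2 (Fin 6)) hfw2 ![2*t₂, 2*t₃, 2*t₄, 2*t₅] hsw2 ({1} : Finset (Fin 4)) ({s(0,1)} : Finset (Sym2 (Fin 6))) (by decide)]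
  rw [← NB_eq_Q t T (![s(0,3), s(0,1), s(1,4), s(1,5)] : Fin 4 → Sym2 (Fin 6)) hfw2 ![2*t₂, 2*t₃, 2*t₄, 2*t₅] hsw2 ({2} : Finset (Fin 4)) ({s(1,4)} : Finset (Sym2 (Fin 6))) (by decide)]
  rw [← NB_eq_Q t T (![s(0,3), s(0,1), s(1,4), s(1,5)] : Fin 4 → Sym2 (Fin 6)) hfw2 ![2*t₂, 2*t₃, 2*t₄, 2*t₅] hsw2 ({3} : Finset (Fin 4)) ({s(1,5)} : Finset (Sym2 (Fin 6))) (by decide)]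
  rw [← NB_eq_Q t T (![s(0,3), s(0,1), s(1,4), s(1,5)] : Fin 4 → Sym2 (Fin 6)) hfw2 ![2*t₂, 2*t₃, 2*t₄, 2*t₅] hsw2 ({0, 1} : Finset (Fin 4)) ({s(0,3), s(0,1)} : Finset (Sym2 (Fin 6))) (by decide)]
  rw [← NB_eq_Q t T (![s(0,3), s(0,1), s(1,4), s(1,5)] : Fin 4 → Sym2 (Fin 6)) hfw2 ![2*t₂, 2*t₃, 2*t₄, 2*t₅] hsw2 ({0, 2} : Finset (Fin 4)) ({s(0,3), s(1,4)} : Finset (Sym2 (Fin 6))) (by decide)]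
  rw [← NB_eq_Q t T (![s(0,3), s(0,1), s(1,4), s(1,5)] : Fin 4 → Sym2 (Fin 6)) hfw2 ![2*t₂, 2*t₃, 2*t₄, 2*t₅] hsw2 ({0, 3} : Finset (Fin 4)) ({s(0,3), s(1,5)} : Finset (Sym2 (Fin 6))) (by decide)]
  rw [← NB_eq_Q t T (![s(0,3), s(0,1), s(1,4), s(1,5)] : Fin 4 → Sym2 (Fin 6)) hfw2 ![2*t₂, 2*t₃, 2*t₄, 2*t₅] hsw2 ({1, 2} : Finset (Fin 4)) ({s(0,1), s(1,4)} : Finset (Sym2 (Fin 6))) (by decide)]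
  rw [← NB_eq_Q t T (![s(0,3), s(0,1), s(1,4), s(1,5)] : Fin 4 → Sym2 (Fin 6)) hfw2 ![2*t₂, 2*t₃, 2*t₄, 2*t₅] hsw2 ({1, 3} : Finset (Fin 4)) ({s(0,1), s(1,5)} : Finset (Sym2 (Fin 6))) (by decide)]
  rw [← NB_eq_Q t T (![s(0,3), s(0,1), s(1,4), s(1,5)] : Fin 4 → Sym2 (Fin 6)) hfw2 ![2*t₂, 2*t₃, 2*t₄, 2*t₅] hsw2 ({2, 3} : Finset (Fin 4)) ({s(1,4), s(1,5)} : Finset (Sym2 (Fin 6))) (by decide)]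
  rw [← NB_eq_Q t T (![s(0,3), s(0,1), s(1,4), s(1,5)] : Fin 4 → Sym2 (Fin 6)) hfw2 ![2*t₂, 2*t₃, 2*t₄, 2*t₅] hsw2 ({0, 1, 2} : Finset (Fin 4)) ({s(0,3), s(0,1), s(1,4)} : Finset (Sym2 (Fin 6))) (by decide)]
  rw [← NB_eq_Q t T (![s(0,3), s(0,1), s(1,4), s(1,5)] : Fin 4 → Sym2 (Fin 6)) hfw2 ![2*t₂, 2*t₃, 2*t₄, 2*t₅] hsw2 ({0, 1, 3} : Finset (Fin 4)) ({s(0,3), s(0,1), s(1,5)} : Finset (Sym2 (Fin 6))) (by decide)]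
  rw [← NB_eq_Q t T (![s(0,3), s(0,1), s(1,4), s(1,5)] : Fin 4 → Sym2 (Fin 6)) hfw2 ![2*t₂, 2*t₃, 2*t₄, 2*t₅] hsw2 ({0, 2, 3} : Finset (Fin 4)) ({s(0,3), s(1,4), s(1,5)} : Finset (Sym2 (Fin 6))) (by decide)]
  rw [← NB_eq_Q t T (![s(0,3), s(0,1), s(1,4), s(1,5)] : Fin 4 → Sym2 (Fin 6)) hfw2 ![2*t₂, 2*t₃, 2*t₄, 2*t₅] hsw2 ({1, 2, 3} : Finset (Fin 4)) ({s(0,1), s(1,4), s(1,5)} : Finset (Sym2 (Fin 6))) (by decide)]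
  rw [← NB_eq_Q t T (![s(0,3), s(0,1), s(1,4), s(1,5)] : Fin 4 → Sym2 (Fin 6)) hfw2 ![2*t₂, 2*t₃, 2*t₄, 2*t₅] hsw2 ({0, 1, 2, 3} : Finset (Fin 4)) ({s(0,3), s(0,1), s(1,4), s(1,5)} : Finset (Sym2 (Fin 6))) (by decide)]
  rw [← NB_eq_Q t T (![s(0,2), s(1,4), s(1,5)] : Fin 3 → Sym2 (Fin 6)) hfw3 ![2*t₁, 2*t₄, 2*t₅] hsw3 (∅ : Finset (Fin 3)) (∅ : Finset (Sym2 (Fin 6))) (by decide)]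
  rw [← NB_eq_Q t T (![s(0,2), s(1,4), s(1,5)] : Fin 3 → Sym2 (Fin 6)) hfw3 ![2*t₁, 2*t₄, 2*t₅] hsw3 ({0} : Finset (Fin 3)) ({s(0,2)} : Finset (Sym2 (Fin 6))) (by decide)]
  rw [← NB_eq_Q t T (![s(0,2), s(1,4), s(1,5)] : Fin 3 → Sym2 (Fin 6)) hfw3 ![2*t₁, 2*t₄, 2*t₅] hsw3 ({1} : Finset (Fin 3)) ({s(1,4)} : Finset (Sym2 (Fin 6))) (by decide)]
  rw [← NB_eq_Q t T (![s(0,2), s(1,4), s(1,5)] : Fin 3 → Sym2 (Fin 6)) hfw3 ![2*t₁, 2*t₄, 2*t₅] hsw3 ({2} : Finset (Fin 3)) ({s(1,5)} : Finset (Sym2 (Fin 6))) (by decide)]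
  rw [← NB_eq_Q t T (![s(0,2), s(1,4), s(1,5)] : Fin 3 → Sym2 (Fin 6)) hfw3 ![2*t₁, 2*t₄, 2*t₅] hsw3 ({0, 1} : Finset (Fin 3)) ({s(0,2), s(1,4)} : Finset (Sym2 (Fin 6))) (by decide)]
  rw [← NB_eq_Q t T (![s(0,2), s(1,4), s(1,5)] : Fin 3 → Sym2 (Fin 6)) hfw3 ![2*t₁, 2*t₄, 2*t₅] hsw3 ({0, 2} : Finset (Fin 3)) ({s(0,2), s(1,5)} : Finset (Sym2 (Fin 6))) (by decide)]
  rw [← NB_eq_Q t T (![s(0,2), s(1,4), s(1,5)] : Fin 3 → Sym2 (Fin 6)) hfw3 ![2*t₁, 2*t₄, 2*t₅] hsw3 ({1, 2} : Finset (Fin 3)) ({s(1,4), s(1,5)} : Finset (Sym2 (Fin 6))) (by decide)]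
  rw [← NB_eq_Q t T (![s(0,2), s(1,4), s(1,5)] : Fin 3 → Sym2 (Fin 6)) hfw3 ![2*t₁, 2*t₄, 2*t₅] hsw3 ({0, 1, 2} : Finset (Fin 3)) ({s(0,2), s(1,4), s(1,5)} : Finset (Sym2 (Fin 6))) (by decide)]
  rw [← NB_eq_Q t T (![s(0,3), s(1,4), s(1,5)] : Fin 3 → Sym2 (Fin 6)) hfw4 ![2*t₂, 2*t₄, 2*t₅] hsw4 (∅ : Finset (Fin 3)) (∅ : Finset (Sym2 (Fin 6))) (by decide)]
  rw [← NB_eq_Q t T (![s(0,3), s(1,4), s(1,5)] : Fin 3 → Sym2 (Fin 6)) hfw4 ![2*t₂, 2*t₄, 2*t₅] hsw4 ({0} : Finset (Fin 3)) ({s(0,3)} : Finset (Sym2 (Fin 6))) (by decide)]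
  rw [← NB_eq_Q t T (![s(0,3), s(1,4), s(1,5)] : Fin 3 → Sym2 (Fin 6)) hfw4 ![2*t₂, 2*t₄, 2*t₅] hsw4 ({1} : Finset (Fin 3)) ({s(1,4)} : Finset (Sym2 (Fin 6))) (by decide)]
  rw [← NB_eq_Q t T (![s(0,3), s(1,4), s(1,5)] : Fin 3 → Sym2 (Fin 6)) hfw4 ![2*t₂, 2*t₄, 2*t₅] hsw4 ({2} : Finset (Fin 3)) ({s(1,5)} : Finset (Sym2 (Fin 6))) (by decide)]
  rw [← NB_eq_Q t T (![s(0,3), s(1,4), s(1,5)] : Fin 3 → Sym2 (Fin 6)) hfw4 ![2*t₂, 2*t₄, 2*t₅] hsw4 ({0, 1} : Finset (Fin 3)) ({s(0,3), s(1,4)} : Finset (Sym2 (Fin 6))) (by decide)]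
  rw [← NB_eq_Q t T (![s(0,3), s(1,4), s(1,5)] : Fin 3 → Sym2 (Fin 6)) hfw4 ![2*t₂, 2*t₄, 2*t₅] hsw4 ({0, 2} : Finset (Fin 3)) ({s(0,3), s(1,5)} : Finset (Sym2 (Fin 6))) (by decide)]
  rw [← NB_eq_Q t T (![s(0,3), s(1,4), s(1,5)] : Fin 3 → Sym2 (Fin 6)) hfw4 ![2*t₂, 2*t₄, 2*t₅] hsw4 ({1, 2} : Finset (Fin 3)) ({s(1,4), s(1,5)} : Finset (Sym2 (Fin 6))) (by decide)]
  rw [← NB_eq_Q t T (![s(0,3), s(1,4), s(1,5)] : Fin 3 → Sym2 (Fin 6)) hfw4 ![2*t₂, 2*t₄, 2*t₅] hsw4 ({0, 1, 2} : Finset (Fin 3)) ({s(0,3), s(1,4), s(1,5)} : Finset (Sym2 (Fin 6))) (by decide)]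
  rw [← NB_eq_Q t T (![s(0,2), s(0,3)] : Fin 2 → Sym2 (Fin 6)) hfw5 ![2*t₁, 2*t₂] hsw5 (∅ : Finset (Fin 2)) (∅ : Finset (Sym2 (Fin 6))) (by decide)]
  rw [← NB_eq_Q t T (![s(0,2), s(0,3)] : Fin 2 → Sym2 (Fin 6)) hfw5 ![2*t₁, 2*t₂] hsw5 ({0} : Finset (Fin 2)) ({s(0,2)} : Finset (Sym2 (Fin 6))) (by decide)]
  rw [← NB_eq_Q t T (![s(0,2), s(0,3)] : Fin 2 → Sym2 (Fin 6)) hfw5 ![2*t₁, 2*t₂] hsw5 ({1} : Finset (Fin 2)) ({s(0,3)} : Finset (Sym2 (Fin 6))) (by decide)]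
  rw [← NB_eq_Q t T (![s(0,2), s(0,3)] : Fin 2 → Sym2 (Fin 6)) hfw5 ![2*t₁, 2*t₂] hsw5 ({0, 1} : Finset (Fin 2)) ({s(0,2), s(0,3)} : Finset (Sym2 (Fin 6))) (by decide)]
  rw [← NB_eq_Q t T (![s(0,2)] : Fin 1 → Sym2 (Fin 6)) hfw6 ![2*t₁] hsw6 (∅ : Finset (Fin 1)) (∅ : Finset (Sym2 (Fin 6))) (by decide)]
  rw [← NB_eq_Q t T (![s(0,2)] : Fin 1 → Sym2 (Fin 6)) hfw6 ![2*t₁] hsw6 ({0} : Finset (Fin 1)) ({s(0,2)} : Finset (Sym2 (Fin 6))) (by decide)]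
  rw [← NB_eq_Q t T (![s(0,3)] : Fin 1 → Sym2 (Fin 6)) hfw7 ![2*t₂] hsw7 (∅ : Finset (Fin 1)) (∅ : Finset (Sym2 (Fin 6))) (by decide)]
  rw [← NB_eq_Q t T (![s(0,3)] : Fin 1 → Sym2 (Fin 6)) hfw7 ![2*t₂] hsw7 ({0} : Finset (Fin 1)) ({s(0,3)} : Finset (Sym2 (Fin 6))) (by decide)]
  rw [NB_empty t T hT]
  push_cast
  ring
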